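/- arXiv:1805.08421 — 3 statements merged into one kernel-verified Lean document; each statement's English description precedes it below -/
import Mathlib

section
/- Let α₁, α₂ ∈ ℂ with α₁ ≠ α₂, α₁α₂ ≠ 0, and N ≥ 2. If z ∈ ℂ is a common root of f_{α₁}(z) = ∑_{i=0}^{N−1} α₁^i z^i and f_{α₂}(z) = ∑_{i=0}^{N−1} α₂^i z^i, then z ≠ 0, (α₁ z)^N = (α₂ z)^N = 1, and (α₁/α₂)^N = 1 with α₁/α₂ ≠ 1; in particular α₁/α₂ is a nontrivial N-th root of unity. -/
lemma geom_sum_zero_pow_eq_one {N : ℕ} (hN : 1 ≤ N) {w : ℂ}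
    (h : (∑ i : Fin N, w ^ (i : ℕ)) = 0) : w ^ N = 1 := by
  rw [Fin.sum_univ_eq_sum_range] at h
  by_cases hw : w = 1
  · subst hw
    simp at h
    omega
  · rw [geom_sum_eq hw] at h
    have := div_eq_zero_iff.mp h
    rcases this with h' | h'
    · exact sub_eq_zero.mp h'
    · exact absurd (sub_eq_zero.mp h') hw

/-- A common root of two steering-vector polynomials forces the ratio of the generators
to be a nontrivial `N`-th root of unity. -/
theorem common_root_ratio_root_of_unity (N : ℕ) (hN : 2 ≤ N) (α₁ α₂ : ℂ)
    (hne : α₁ ≠ α₂) (hprod : α₁ * α₂ ≠ 0) (z : ℂ)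
    (h1 : (∑ i : Fin N, α₁ ^ (i : ℕ) * z ^ (i : ℕ)) = 0)
    (h2 : (∑ i : Fin N, α₂ ^ (i : ℕ) * z ^ (i : ℕ)) = 0) :
    z ≠ 0 ∧ (α₁ * z) ^ N = 1 ∧ (α₂ * z) ^ N = 1 ∧ (α₁ / α₂) ^ N = 1 ∧ α₁ / α₂ ≠ 1 := by
  have hα₁ : α₁ ≠ 0 := fun h => hprod (by simp [h])
  have hα₂ : α₂ ≠ 0 := fun h => hprod (by simp [h])
  have e1 : (∑ i : Fin N, (α₁ * z) ^ (i : ℕ)) = 0 := by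
    simpa [mul_pow] using h1
  have e2 : (∑ i : Fin N, (α₂ * z) ^ (i : ℕ)) = 0 := by
    simpa [mul_pow] using h2
  have p1 := geom_sum_zero_pow_eq_one (by omega) e1
  have p2 := geom_sum_zero_pow_eq_one (by omega) e2
  have hz : z ≠ 0 := by
    intro h
    subst h
    rw [mul_zero, zero_pow (by omega : N ≠ 0)] at p1
    exact zero_ne_one p1
  refine ⟨hz, p1, p2, ?_, ?_⟩
  · have : (α₁ / α₂) ^ N = (α₁ * z) ^ N / ((α₂ * z) ^ N) := by
      field_simp
      rw [← mul_pow, div_mul_eq_mul_div, mul_div_assoc, mul_div_cancel_left₀ z hα₂]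
    rw [this, p1, p2, div_one]
  · intro h
    exact hne (by field_simp at h; linear_combination h)
end

section
/- Let f₁, …, f_M ∈ ℂ[z], each of degree at most N−1 with coefficient vectors in ℂ^N, and fix α ∈ ℂ. The minimum of ∑_{m=1}^{M} ∑_{i=0}^{N−1} |λ_{m,i}|² over all perturbations λ_m ∈ ℂ^N such that each perturbed polynomial f̂_m(z) = ∑_i (f_{m,i} + λ_{m,i}) z^i vanishes at α, equals (∑_{m=1}^{M} |f_m(α)|²) / (∑_{k=0}^{N−1} |α|^{2k}). -/
open Complex

/-- Theorem 1 (multi-polynomial version): the minimal total coefficient perturbation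
forcing `α` to be a common root of `M` polynomials equals
`(∑_m |f_m(α)|²) / (∑_{k<N} |α|^{2k})`. -/
theorem nearest_common_root_perturbation (N M : ℕ) (hN : 1 ≤ N)
    (f : Fin M → Fin N → ℂ) (α : ℂ) :
    IsLeast
      {s : ℝ | ∃ l : Fin M → Fin N → ℂ,
        (∀ m : Fin M, (∑ i : Fin N, (f m i + l m i) * α ^ (i : ℕ)) = 0) ∧
        s = ∑ m : Fin M, ∑ i : Fin N, ‖l m i‖ ^ 2}
      ((∑ m : Fin M, ‖∑ i : Fin N, f m i * α ^ (i : ℕ)‖ ^ 2) /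
        ∑ k : Fin N, ‖α‖ ^ (2 * (k : ℕ))) := by
  set S : ℝ := ∑ k : Fin N, ‖α‖ ^ (2 * (k : ℕ)) with hSdef
  have hSterm : ∀ k : Fin N, ‖α‖ ^ (2 * (k : ℕ)) = ‖α ^ (k:ℕ)‖ ^ 2 := by
    intro k
    rw [norm_pow, ← pow_mul, mul_comm]
  have hSpos : 0 < S := by
    have h0 : (⟨0, hN⟩ : Fin N) ∈ Finset.univ := Finset.mem_univ _
    have := Finset.single_le_sum (f := fun k : Fin N => ‖α‖ ^ (2 * (k : ℕ)))
      (fun k _ => by positivity) h0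
    simpa using lt_of_lt_of_le (by norm_num) this
  have hSne : (S : ℂ) ≠ 0 := by
    exact_mod_cast Complex.ofReal_ne_zero.mpr (ne_of_gt hSpos)
  set F : Fin M → ℂ := fun m => ∑ i : Fin N, f m i * α ^ (i : ℕ) with hF
  have hsum : ∑ i : Fin N, (starRingEnd ℂ (α ^ (i:ℕ)) * α ^ (i:ℕ)) = (S : ℂ) := by
    rw [hSdef]
    push_cast
    refine Finset.sum_congr rfl (fun i _ => ?_)
    rw [mul_comm, Complex.mul_conj, Complex.normSq_eq_norm_sq]
    norm_cast
    rw [norm_pow, ← pow_mul, mul_comm]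
  constructor
  · -- membership
    refine ⟨fun m i => -(starRingEnd ℂ (α ^ (i:ℕ))) * F m / S, ?_, ?_⟩
    · intro m
      have h1 : ∀ i : Fin N,
          (f m i + (-(starRingEnd ℂ (α ^ (i:ℕ))) * F m / S)) * α ^ (i:ℕ)
          = f m i * α ^ (i:ℕ) + (starRingEnd ℂ (α ^ (i:ℕ)) * α ^ (i:ℕ)) * (-(F m) / S) :=
        fun i => by ring
      rw [Finset.sum_congr rfl (fun i _ => h1 i), Finset.sum_add_distrib,
        ← Finset.sum_mul, hsum, show (∑ i : Fin N, f m i * α ^ (i:ℕ)) = F m from rfl]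
      field_simp
      ring
    · rw [Finset.sum_div]
      refine Finset.sum_congr rfl (fun m _ => ?_)
      have h2 : ∀ i : Fin N, ‖-(starRingEnd ℂ (α ^ (i:ℕ))) * F m / (S:ℂ)‖ ^ 2
          = ‖α‖ ^ (2 * (i:ℕ)) * (‖F m‖ ^ 2 / S ^ 2) := by
        intro i
        rw [hSterm i]
        simp only [norm_div, norm_mul, norm_neg, Complex.norm_conj,
          Complex.norm_real, Real.norm_eq_abs, abs_of_pos hSpos]
        field_simp
      rw [Finset.sum_congr rfl (fun i _ => h2 i), ← Finset.sum_mul, ← hSdef, show (∑ i : Fin N, f m i * α ^ (i:ℕ)) = F m from rfl]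
      field_simp
  · rintro s ⟨l, hroot, rfl⟩
    rw [div_le_iff₀ hSpos]
    have key : ∀ m : Fin M, ‖F m‖ ^ 2 ≤ (∑ i : Fin N, ‖l m i‖ ^ 2) * S := by
      intro m
      have hc : ∑ i : Fin N, l m i * α ^ (i:ℕ) = -F m := by
        have h := hroot m
        rw [Finset.sum_congr rfl (fun i _ => add_mul (f m i) (l m i) (α ^ (i:ℕ))),
          Finset.sum_add_distrib, show (∑ i : Fin N, f m i * α ^ (i:ℕ)) = F m from rfl] at h
        linear_combination h
      have h1 : ‖F m‖ ≤ ∑ i : Fin N, ‖l m i‖ * ‖α ^ (i:ℕ)‖ := by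
        calc ‖F m‖ = ‖∑ i : Fin N, l m i * α ^ (i:ℕ)‖ := by
              rw [hc, norm_neg]
          _ ≤ ∑ i : Fin N, ‖l m i * α ^ (i:ℕ)‖ :=
              norm_sum_le _ _
          _ = ∑ i : Fin N, ‖l m i‖ * ‖α ^ (i:ℕ)‖ := by
              simp [norm_mul]
      calc ‖F m‖ ^ 2
          ≤ (∑ i : Fin N, ‖l m i‖ * ‖α ^ (i:ℕ)‖) ^ 2 :=
            pow_le_pow_left₀ (norm_nonneg _) h1 2
        _ ≤ (∑ i : Fin N, ‖l m i‖ ^ 2) * (∑ i : Fin N, ‖α ^ (i:ℕ)‖ ^ 2) :=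
            Finset.sum_mul_sq_le_sq_mul_sq _ _ _
        _ = (∑ i : Fin N, ‖l m i‖ ^ 2) * S := by
            rw [hSdef]
            congr 1
            exact Finset.sum_congr rfl (fun i _ => (hSterm i).symm)
    calc ∑ m : Fin M, ‖F m‖ ^ 2
        ≤ ∑ m : Fin M, (∑ i : Fin N, ‖l m i‖ ^ 2) * S :=
          Finset.sum_le_sum (fun m _ => key m)
      _ = (∑ m : Fin M, ∑ i : Fin N, ‖l m i‖ ^ 2) * S := by
          rw [Finset.sum_mul]
end

section
/- Let u, ũ ∈ ℂ[x] be monic polynomials of the same degree n whose roots can be listed as α₁,…,α_n and α̃₁,…,α̃_n (with multiplicity) such that |α_i − α̃_i| ≤ δ for all i, with δ ≥ 0 and |α_i| ≤ 1 for all i. Then for each coefficient index k, |u_k − ũ_k| ≤ C(n,k) · ((1+δ)^n − 1) for the binomial-type constant C(n,k) = binom(n,k); in particular the ℓ∞-distance of the coefficient vectors is at most max_k binom(n,k) · ((1+δ)^n − 1). -/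
open Polynomial

lemma coeff_prod_abs_le (r : ℝ) (hr : 1 ≤ r) :
    ∀ (n : ℕ) (γ : Fin n → ℂ), (∀ i, ‖γ i‖ ≤ r) →
      ∀ k, ‖(∏ i : Fin n, (X - C (γ i))).coeff k‖ ≤ (n.choose k : ℝ) * r ^ n := by
  intro n
  induction n with
  | zero =>
    intro γ _ k
    simp only [Finset.univ_eq_empty, Finset.prod_empty]
    cases k with
    | zero => simp
    | succ k => simp [Polynomial.coeff_one]
  | succ n ih =>
    intro γ hγ k
    rw [Fin.prod_univ_castSucc]
    set p := ∏ i : Fin n, (X - C (γ i.castSucc)) with hp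
    have hbp : ∀ k, ‖p.coeff k‖ ≤ (n.choose k : ℝ) * r ^ n := by
      intro k; simpa [hp] using ih (fun i => γ i.castSucc) (fun i => hγ _) k
    set a := γ (Fin.last n) with ha
    have haa : ‖a‖ ≤ r := hγ _
    have hrn : (0:ℝ) ≤ r ^ n := by positivity
    have hrr : r ^ n ≤ r ^ (n + 1) := by
      calc r ^ n = 1 * r ^ n := by ring
      _ ≤ r * r ^ n := by nlinarith
      _ = r ^ (n+1) := by ring
    have key : ∀ k, (p * (X - C a)).coeff k = (p * X).coeff k - a * p.coeff k := by
      intro k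
      rw [mul_sub, Polynomial.coeff_sub, Polynomial.coeff_mul_C, mul_comm (p.coeff k) a]
    cases k with
    | zero =>
      rw [key]
      have h0 : (p * X).coeff 0 = 0 := by
        rw [Polynomial.coeff_mul_X_zero]
      rw [h0, zero_sub, norm_neg, norm_mul]
      have h1 := hbp 0
      have h2 : ‖a‖ * ‖p.coeff 0‖ ≤ r * ((n.choose 0 : ℝ) * r ^ n) := by
        apply mul_le_mul haa h1 (norm_nonneg _) (by linarith)
      calc ‖a‖ * ‖p.coeff 0‖ ≤ r * ((n.choose 0 : ℝ) * r ^ n) := h2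
        _ = ((n+1).choose 0 : ℝ) * r ^ (n+1) := by
            simp [Nat.choose_zero_right]; ring
    | succ k =>
      rw [key, Polynomial.coeff_mul_X]
      have h1 := hbp k
      have h2 := hbp (k+1)
      have habs : ‖p.coeff k - a * p.coeff (k+1)‖ ≤
          ‖p.coeff k‖ + ‖a‖ * ‖p.coeff (k+1)‖ := by
        calc ‖p.coeff k - a * p.coeff (k+1)‖
            ≤ ‖p.coeff k‖ + ‖a * p.coeff (k+1)‖ :=
              norm_sub_le _ _
          _ = ‖p.coeff k‖ + ‖a‖ * ‖p.coeff (k+1)‖ := by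
              rw [norm_mul]
      have hch : ((n+1).choose (k+1) : ℝ) = (n.choose k : ℝ) + (n.choose (k+1) : ℝ) := by
        rw [Nat.choose_succ_succ]; push_cast; ring
      have h3 : ‖a‖ * ‖p.coeff (k+1)‖ ≤ r * ((n.choose (k+1) : ℝ) * r ^ n) :=
        mul_le_mul haa h2 (norm_nonneg _) (by linarith)
      have hnn : (0:ℝ) ≤ (n.choose (k+1) : ℝ) := by positivity
      calc ‖p.coeff k - a * p.coeff (k+1)‖
          ≤ ‖p.coeff k‖ + ‖a‖ * ‖p.coeff (k+1)‖ := habs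
        _ ≤ (n.choose k : ℝ) * r ^ n + r * ((n.choose (k+1) : ℝ) * r ^ n) := by linarith
        _ ≤ ((n+1).choose (k+1) : ℝ) * r ^ (n+1) := by
            rw [hch, pow_succ]
            have hck : (0:ℝ) ≤ (n.choose k : ℝ) := by positivity
            nlinarith [mul_nonneg (mul_nonneg hck hrn) (show (0:ℝ) ≤ r - 1 by linarith)]

lemma coeff_perturbation_bound_aux (δ : ℝ) (hδ : 0 ≤ δ) :
    ∀ (n : ℕ) (α β : Fin n → ℂ), (∀ i, ‖α i‖ ≤ 1) →
      (∀ i, ‖α i - β i‖ ≤ δ) →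
      ∀ k : ℕ,
        ‖(∏ i : Fin n, (X - C (α i))).coeff k -
            (∏ i : Fin n, (X - C (β i))).coeff k‖
          ≤ (n.choose k : ℝ) * ((1 + δ) ^ n - 1) := by
  intro n
  induction n with
  | zero =>
    intro α β hα hclose k
    simp
  | succ n ih =>
    intro α β hα hclose k
    have hβ : ∀ i, ‖β i‖ ≤ 1 + δ := by
      intro i
      calc ‖β i‖ = ‖α i - (α i - β i)‖ := by ring_nf
        _ ≤ ‖α i‖ + ‖α i - β i‖ := by
            apply norm_sub_le
        _ ≤ 1 + δ := add_le_add (hα i) (hclose i)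
    rw [Fin.prod_univ_castSucc, Fin.prod_univ_castSucc]
    set u := ∏ i : Fin n, (X - C (α i.castSucc)) with hu
    set v := ∏ i : Fin n, (X - C (β i.castSucc)) with hv
    set a := α (Fin.last n) with ha
    set b := β (Fin.last n) with hb
    have ihkk : ∀ k, ‖u.coeff k - v.coeff k‖
        ≤ (n.choose k : ℝ) * ((1 + δ) ^ n - 1) := by
      intro k
      simpa [hu, hv] using ih (fun i => α i.castSucc) (fun i => β i.castSucc)
        (fun i => hα _) (fun i => hclose _) k
    have hvb : ∀ k, ‖v.coeff k‖ ≤ (n.choose k : ℝ) * (1 + δ) ^ n := by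
      intro k
      simpa [hv] using coeff_prod_abs_le (1 + δ) (by linarith) n
        (fun i => β i.castSucc) (fun i => hβ _) k
    have haa : ‖a‖ ≤ 1 := hα _
    have hab : ‖a - b‖ ≤ δ := hclose _
    set D : ℝ := (1 + δ) ^ n - 1 with hD
    have hDnn : 0 ≤ D := by
      have : (1:ℝ) ≤ (1 + δ) ^ n := one_le_pow₀ (by linarith)
      linarith
    have hPn : (0:ℝ) ≤ (1 + δ) ^ n := by positivity
    have hD' : (1 + δ) ^ (n + 1) - 1 = D + δ * (1 + δ) ^ n := by
      rw [hD, pow_succ]; ring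
    have key : ∀ (p : ℂ[X]) (c : ℂ) (k : ℕ),
        (p * (X - C c)).coeff k = (p * X).coeff k - c * p.coeff k := by
      intro p c k
      rw [mul_sub, Polynomial.coeff_sub, Polynomial.coeff_mul_C, mul_comm (p.coeff k) c]
    cases k with
    | zero =>
      rw [key, key, Polynomial.coeff_mul_X_zero, Polynomial.coeff_mul_X_zero]
      have heq : (0 : ℂ) - a * u.coeff 0 - ((0:ℂ) - b * v.coeff 0)
          = -(a * (u.coeff 0 - v.coeff 0)) - (a - b) * v.coeff 0 := by ring
      rw [heq]
      have h1 : ‖-(a * (u.coeff 0 - v.coeff 0)) - (a - b) * v.coeff 0‖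
          ≤ ‖a‖ * ‖u.coeff 0 - v.coeff 0‖
            + ‖a - b‖ * ‖v.coeff 0‖ := by
        calc ‖-(a * (u.coeff 0 - v.coeff 0)) - (a - b) * v.coeff 0‖
            ≤ ‖-(a * (u.coeff 0 - v.coeff 0))‖ + ‖(a - b) * v.coeff 0‖ :=
              norm_sub_le _ _
          _ = ‖a‖ * ‖u.coeff 0 - v.coeff 0‖
              + ‖a - b‖ * ‖v.coeff 0‖ := by
              rw [norm_neg, norm_mul, norm_mul]
      have h2 := ihkk 0
      have h3 := hvb 0
      simp only [Nat.choose_zero_right, Nat.cast_one, one_mul] at h2 h3 ⊢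
      have h4 : ‖a‖ * ‖u.coeff 0 - v.coeff 0‖ ≤ 1 * D :=
        mul_le_mul haa h2 (norm_nonneg _) zero_le_one
      have h5 : ‖a - b‖ * ‖v.coeff 0‖ ≤ δ * (1 + δ) ^ n :=
        mul_le_mul hab h3 (norm_nonneg _) hδ
      rw [hD']
      linarith
    | succ k =>
      rw [key, key, Polynomial.coeff_mul_X, Polynomial.coeff_mul_X]
      have heq : u.coeff k - a * u.coeff (k+1) - (v.coeff k - b * v.coeff (k+1))
          = (u.coeff k - v.coeff k) - a * (u.coeff (k+1) - v.coeff (k+1))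
            - (a - b) * v.coeff (k+1) := by ring
      rw [heq]
      have h1 : ‖(u.coeff k - v.coeff k) - a * (u.coeff (k+1) - v.coeff (k+1))
            - (a - b) * v.coeff (k+1)‖
          ≤ ‖u.coeff k - v.coeff k‖
            + ‖a‖ * ‖u.coeff (k+1) - v.coeff (k+1)‖
            + ‖a - b‖ * ‖v.coeff (k+1)‖ := by
        calc ‖(u.coeff k - v.coeff k) - a * (u.coeff (k+1) - v.coeff (k+1))
              - (a - b) * v.coeff (k+1)‖
            ≤ ‖(u.coeff k - v.coeff k) - a * (u.coeff (k+1) - v.coeff (k+1))‖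
              + ‖(a - b) * v.coeff (k+1)‖ := norm_sub_le _ _
          _ ≤ ‖u.coeff k - v.coeff k‖
              + ‖a * (u.coeff (k+1) - v.coeff (k+1))‖
              + ‖(a - b) * v.coeff (k+1)‖ := by
              have := norm_sub_le (u.coeff k - v.coeff k)
                (a * (u.coeff (k+1) - v.coeff (k+1)))
              linarith
          _ = ‖u.coeff k - v.coeff k‖
              + ‖a‖ * ‖u.coeff (k+1) - v.coeff (k+1)‖
              + ‖a - b‖ * ‖v.coeff (k+1)‖ := by
              rw [norm_mul, norm_mul]
      have h2 := ihkk k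
      have h3 := ihkk (k+1)
      have h4 := hvb (k+1)
      have h5 : ‖a‖ * ‖u.coeff (k+1) - v.coeff (k+1)‖
          ≤ 1 * ((n.choose (k+1) : ℝ) * D) :=
        mul_le_mul haa h3 (norm_nonneg _) zero_le_one
      have h6 : ‖a - b‖ * ‖v.coeff (k+1)‖
          ≤ δ * ((n.choose (k+1) : ℝ) * (1 + δ) ^ n) :=
        mul_le_mul hab h4 (norm_nonneg _) hδ
      have hch : ((n+1).choose (k+1) : ℝ) = (n.choose k : ℝ) + (n.choose (k+1) : ℝ) := by
        rw [Nat.choose_succ_succ]; push_cast; ring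
      have hnk : (0:ℝ) ≤ (n.choose k : ℝ) := by positivity
      rw [hch, hD']
      nlinarith [mul_nonneg (mul_nonneg hnk hδ) hPn]

/-- Coefficient perturbation bound: if the roots of two monic degree-`n` polynomials are
pairwise within `δ` and lie (for `u`) in the closed unit disk, then each coefficient
moves by at most `binom(n,k)·((1+δ)^n − 1)`. -/
theorem coeff_perturbation_bound (n : ℕ) (δ : ℝ) (hδ : 0 ≤ δ)
    (α β : Fin n → ℂ) (hα : ∀ i, ‖α i‖ ≤ 1)
    (hclose : ∀ i, ‖α i - β i‖ ≤ δ) :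
    ∀ k : ℕ,
      ‖(∏ i : Fin n, (X - C (α i))).coeff k -
          (∏ i : Fin n, (X - C (β i))).coeff k‖
        ≤ (n.choose k : ℝ) * ((1 + δ) ^ n - 1) := by
  exact coeff_perturbation_bound_aux δ hδ n α β hα hclose
end
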